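/- Let (A, B) be a separating pair of continuous aggregation functions on [0,1]². Then the relation ≤_{A,B} on Ĩ is a linear order (reflexive, antisymmetric, transitive, and total) that refines Atanassov's partial order: for all α, β ∈ Ĩ, α ⊂ β implies α ≤_{A,B} β; hence ≤_{A,B} is an IF-admissible order on Ĩ. -/
import Mathlib


/-- The set of intuitionistic fuzzy values (IFVs). -/
def Itilde : Set (ℝ × ℝ) :=
  {p | 0 ≤ p.1 ∧ p.1 ≤ 1 ∧ 0 ≤ p.2 ∧ p.2 ≤ 1 ∧ p.1 + p.2 ≤ 1}

/-- Atanassov's partial order on IFVs. -/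
def atanassovLE (a b : ℝ × ℝ) : Prop := a.1 ≤ b.1 ∧ b.2 ≤ a.2

/-- An aggregation function on `[0,1]²`: maps into `[0,1]`, is nondecreasing in
each variable, and satisfies the boundary conditions `A(0,0) = 0`, `A(1,1) = 1`. -/
structure IsAggregation (A : ℝ → ℝ → ℝ) : Prop where
  mapsTo : ∀ x y, x ∈ Set.Icc (0 : ℝ) 1 → y ∈ Set.Icc (0 : ℝ) 1 →
    A x y ∈ Set.Icc (0 : ℝ) 1
  mono_left : ∀ x₁ x₂ y, x₁ ∈ Set.Icc (0 : ℝ) 1 → x₂ ∈ Set.Icc (0 : ℝ) 1 →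
    y ∈ Set.Icc (0 : ℝ) 1 → x₁ ≤ x₂ → A x₁ y ≤ A x₂ y
  mono_right : ∀ x y₁ y₂, x ∈ Set.Icc (0 : ℝ) 1 → y₁ ∈ Set.Icc (0 : ℝ) 1 →
    y₂ ∈ Set.Icc (0 : ℝ) 1 → y₁ ≤ y₂ → A x y₁ ≤ A x y₂
  zero : A 0 0 = 0
  one : A 1 1 = 1

/-- `Ā(α) = A(μ_α, 1 - ν_α)`. -/
def aggBar (A : ℝ → ℝ → ℝ) (p : ℝ × ℝ) : ℝ := A p.1 (1 - p.2)

/-- The order `≤_{A,B}` on IFVs. -/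
def abLE (A B : ℝ → ℝ → ℝ) (a b : ℝ × ℝ) : Prop :=
  aggBar A a < aggBar A b ∨ (aggBar A a = aggBar A b ∧ aggBar B a ≤ aggBar B b)

/-- For a separating pair `(A, B)` of continuous aggregation functions, `≤_{A,B}`
is a linear order on `Ĩ` refining Atanassov's partial order, i.e., it is an
IF-admissible order. -/
theorem abLE_isAdmissibleOrder (A B : ℝ → ℝ → ℝ)
    (hA : IsAggregation A) (hB : IsAggregation B)
    (hAc : ContinuousOn (fun p : ℝ × ℝ => A p.1 p.2)
      (Set.Icc (0 : ℝ) 1 ×ˢ Set.Icc (0 : ℝ) 1))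
    (hBc : ContinuousOn (fun p : ℝ × ℝ => B p.1 p.2)
      (Set.Icc (0 : ℝ) 1 ×ˢ Set.Icc (0 : ℝ) 1))
    (hsep : ∀ x₁ y₁ x₂ y₂, x₁ ∈ Set.Icc (0 : ℝ) 1 → y₁ ∈ Set.Icc (0 : ℝ) 1 →
      x₂ ∈ Set.Icc (0 : ℝ) 1 → y₂ ∈ Set.Icc (0 : ℝ) 1 →
      A x₁ y₁ = A x₂ y₂ → B x₁ y₁ = B x₂ y₂ → x₁ = x₂ ∧ y₁ = y₂) :
    (∀ a ∈ Itilde, abLE A B a a) ∧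
    (∀ a ∈ Itilde, ∀ b ∈ Itilde, abLE A B a b → abLE A B b a → a = b) ∧
    (∀ a ∈ Itilde, ∀ b ∈ Itilde, ∀ c ∈ Itilde,
      abLE A B a b → abLE A B b c → abLE A B a c) ∧
    (∀ a ∈ Itilde, ∀ b ∈ Itilde, abLE A B a b ∨ abLE A B b a) ∧
    (∀ a ∈ Itilde, ∀ b ∈ Itilde, atanassovLE a b → abLE A B a b) := by
  have hmem : ∀ a : ℝ × ℝ, a ∈ Itilde →
      a.1 ∈ Set.Icc (0:ℝ) 1 ∧ (1 - a.2) ∈ Set.Icc (0:ℝ) 1 := by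
    rintro a ⟨h1, h2, h3, h4, h5⟩
    exact ⟨⟨h1, h2⟩, ⟨by linarith, by linarith⟩⟩
  refine ⟨?_, ?_, ?_, ?_, ?_⟩
  · intro a _; exact Or.inr ⟨rfl, le_refl _⟩
  · intro a ha b hb hab hba
    obtain ⟨ha1, ha2⟩ := hmem a ha
    obtain ⟨hb1, hb2⟩ := hmem b hb
    have hAeq : aggBar A a = aggBar A b := by
      rcases hab with h | ⟨h, _⟩
      · rcases hba with h' | ⟨h', _⟩ <;> linarith
      · exact h
    have hBeq : aggBar B a = aggBar B b := by
      rcases hab with h | ⟨_, h⟩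
      · exact absurd hAeq (ne_of_lt h)
      · rcases hba with h' | ⟨_, h'⟩
        · exact absurd hAeq.symm (ne_of_lt h')
        · linarith
    obtain ⟨e1, e2⟩ := hsep a.1 (1 - a.2) b.1 (1 - b.2) ha1 ha2 hb1 hb2 hAeq hBeq
    have : a.2 = b.2 := by linarith
    exact Prod.ext e1 this
  · intro a _ b _ c _ hab hbc
    rcases hab with h | ⟨h, h'⟩ <;> rcases hbc with g | ⟨g, g'⟩
    · exact Or.inl (lt_trans h g)
    · exact Or.inl (g ▸ h)
    · exact Or.inl (h ▸ g)
    · exact Or.inr ⟨h.trans g, h'.trans g'⟩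
  · intro a _ b _
    rcases lt_trichotomy (aggBar A a) (aggBar A b) with h | h | h
    · exact Or.inl (Or.inl h)
    · rcases le_total (aggBar B a) (aggBar B b) with g | g
      · exact Or.inl (Or.inr ⟨h, g⟩)
      · exact Or.inr (Or.inr ⟨h.symm, g⟩)
    · exact Or.inr (Or.inl h)
  · intro a ha b hb ⟨h1, h2⟩
    obtain ⟨ha1, ha2⟩ := hmem a ha
    obtain ⟨hb1, hb2⟩ := hmem b hb
    have h2' : 1 - a.2 ≤ 1 - b.2 := by linarith
    have hAle : aggBar A a ≤ aggBar A b :=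
      le_trans (hA.mono_left a.1 b.1 (1 - a.2) ha1 hb1 ha2 h1)
        (hA.mono_right b.1 (1 - a.2) (1 - b.2) hb1 ha2 hb2 h2')
    rcases lt_or_eq_of_le hAle with h | h
    · exact Or.inl h
    · exact Or.inr ⟨h, le_trans (hB.mono_left a.1 b.1 (1 - a.2) ha1 hb1 ha2 h1)
        (hB.mono_right b.1 (1 - a.2) (1 - b.2) hb1 ha2 hb2 h2')⟩
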